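/- Let X be a graph on n vertices with an independent set S of size s, and let B be a symmetric n×n matrix indexed by vertices such that: B is positive semidefinite, B_{ij} ≤ 0 whenever i ≠ j and i is not adjacent to j, B has constant row sum r > 0, and B has constant diagonal t. Then s ≤ n·t/r. -/

import Mathlib

open Matrix Finset

/-- Generalized LP bound: if `B ⪰ 0` is symmetric with `B_{ij} ≤ 0` on non-adjacent
pairs `i ≠ j`, constant row sum `r > 0` and constant diagonal `t`, then any independent
set satisfies `s ≤ n·t/r`. -/
theorem stmt12 (n : ℕ) (hn : 0 < n)
    (A : Matrix (Fin n) (Fin n) ℝ) (hsym : A.IsSymm)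
    (h01 : ∀ i j, A i j = 0 ∨ A i j = 1)
    (S : Finset (Fin n)) (hind : ∀ i ∈ S, ∀ j ∈ S, i ≠ j → A i j = 0)
    (B : Matrix (Fin n) (Fin n) ℝ) (hBpsd : B.PosSemidef)
    (hBoff : ∀ i j, i ≠ j → A i j = 0 → B i j ≤ 0)
    (r t : ℝ) (hr : 0 < r)
    (hrow : ∀ i, ∑ j, B i j = r)
    (hdiag : ∀ i, B i i = t) :
    (S.card : ℝ) ≤ n * t / r := by
  classical
  set s : ℝ := (S.card : ℝ) with hs
  have hn' : (0:ℝ) < n := by exact_mod_cast hn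
  -- symmetry of B
  have hBsym : ∀ i j, B i j = B j i := by
    intro i j
    have h := congrFun (congrFun hBpsd.1 j) i
    simpa using h
  -- column sums
  have hcol : ∀ j, ∑ i, B i j = r := by
    intro j
    calc ∑ i, B i j = ∑ i, B j i := by simp_rw [fun i => hBsym i j]
    _ = r := hrow j
  -- the shifted indicator vector
  set c : ℝ := s / n with hc
  set y : Fin n → ℝ := fun i => (if i ∈ S then (1:ℝ) else 0) - c with hy
  have hQ : 0 ≤ dotProduct (star y) (B *ᵥ y) := hBpsd.dotProduct_mulVec_nonneg y
  -- T = sum over S × S of B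
  set T : ℝ := ∑ i ∈ S, ∑ j ∈ S, B i j with hT
  -- compute the quadratic form
  have hE1 : ∑ i, ∑ j, B i j * (if i ∈ S then (1:ℝ) else 0) * (if j ∈ S then (1:ℝ) else 0) = T := by
    rw [hT]
    rw [← Finset.sum_subset (Finset.subset_univ S)]
    · refine Finset.sum_congr rfl fun i hi => ?_
      rw [← Finset.sum_subset (Finset.subset_univ S)]
      · exact Finset.sum_congr rfl fun j hj => by simp [hi, hj]
      · intro j _ hj; simp [hj]
    · intro i _ hi
      simp [hi]
  have hE2 : ∑ i, ∑ j, B i j * (if j ∈ S then (1:ℝ) else 0) = s * r := by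
    rw [Finset.sum_comm]
    have : ∀ j : Fin n, ∑ i, B i j * (if j ∈ S then (1:ℝ) else 0)
        = (if j ∈ S then (1:ℝ) else 0) * r := by
      intro j
      rw [← Finset.sum_mul, hcol j, mul_comm]
    simp_rw [this]
    rw [← Finset.sum_mul]
    congr 1
    simp [hs]
  have hE3 : ∑ i, ∑ j, B i j * (if i ∈ S then (1:ℝ) else 0) = s * r := by
    have : ∀ i : Fin n, ∑ j, B i j * (if i ∈ S then (1:ℝ) else 0)
        = (if i ∈ S then (1:ℝ) else 0) * r := by
      intro i
      rw [← Finset.sum_mul, hrow i, mul_comm]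
    simp_rw [this]
    rw [← Finset.sum_mul]
    congr 1
    simp [hs]
  have hE4 : ∑ i : Fin n, ∑ j, B i j = (n : ℝ) * r := by
    simp_rw [hrow]
    simp [mul_comm]
  have hQeq : dotProduct (star y) (B *ᵥ y)
      = T - 2 * c * (s * r) + c ^ 2 * ((n:ℝ) * r) := by
    have expand : dotProduct (star y) (B *ᵥ y)
        = ∑ i, ∑ j, B i j * y i * y j := by
      simp only [dotProduct, Matrix.mulVec, Pi.star_apply, star_trivial, id_eq,
        Finset.mul_sum]
      exact Finset.sum_congr rfl fun i _ => Finset.sum_congr rfl fun j _ => by ring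
    rw [expand]
    have : ∀ i j, B i j * y i * y j
        = B i j * (if i ∈ S then (1:ℝ) else 0) * (if j ∈ S then (1:ℝ) else 0)
          - c * (B i j * (if j ∈ S then (1:ℝ) else 0))
          - c * (B i j * (if i ∈ S then (1:ℝ) else 0))
          + c ^ 2 * B i j := by
      intro i j; rw [hy]; ring
    simp_rw [this]
    rw [show ∀ f g h k : Fin n → Fin n → ℝ,
      (∑ i, ∑ j, (f i j - g i j - h i j + k i j))
        = (∑ i, ∑ j, f i j) - (∑ i, ∑ j, g i j) - (∑ i, ∑ j, h i j) + (∑ i, ∑ j, k i j)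
      from fun f g h k => by
        simp_rw [Finset.sum_add_distrib, Finset.sum_sub_distrib]]
    rw [hE1]
    simp_rw [← Finset.mul_sum]
    rw [hE2, hE3, hE4]
    ring
  -- bound T from above by s * t
  have hTle : T ≤ s * t := by
    have : ∀ i ∈ S, ∑ j ∈ S, B i j ≤ t := by
      intro i hi
      have hsplit : ∑ j ∈ S, B i j = B i i + ∑ j ∈ S.erase i, B i j := by
        rw [← Finset.sum_erase_add S _ hi]; ring
      rw [hsplit, hdiag i]
      have : ∑ j ∈ S.erase i, B i j ≤ 0 := by
        apply Finset.sum_nonpos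
        intro j hj
        have hji := Finset.mem_erase.mp hj
        exact hBoff i j (Ne.symm hji.1) (hind i hi j hji.2 (Ne.symm hji.1))
      linarith
    calc T ≤ ∑ _i ∈ S, t := Finset.sum_le_sum this
    _ = s * t := by rw [Finset.sum_const, nsmul_eq_mul, hs]
  -- combine
  have key : s * s * r / n ≤ s * t := by
    have h1 : 0 ≤ T - 2 * c * (s * r) + c ^ 2 * ((n:ℝ) * r) := hQeq ▸ hQ
    have hceq : 2 * c * (s * r) - c ^ 2 * ((n:ℝ) * r) = s * s * r / n := by
      rw [hc]; field_simp; ring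
    linarith
  have hs0 : (0:ℝ) ≤ s := by rw [hs]; positivity
  rcases eq_or_lt_of_le hs0 with h0 | h0
  · rw [← h0]
    have ht : 0 ≤ t := by
      have := hBpsd.dotProduct_mulVec_nonneg (Pi.single (⟨0, hn⟩ : Fin n) 1)
      simpa [Matrix.mulVec_single, dotProduct, Pi.single_apply, hdiag] using this
    positivity
  · rw [le_div_iff₀ hr]
    have : s * (s * r) ≤ s * ((n:ℝ) * t) := by
      have := key
      rw [div_le_iff₀ hn'] at this
      nlinarith
    have := (mul_le_mul_iff_right₀ h0).mp this
    linarith
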